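/- There do not exist F-linearly independent elements v, w, z ∈ A such that the F-span of {v, w, z} is a Kummer space and vw = i·wv, wz = i·zw, and zv = i·vz (i.e., there is no directed 3-cycle). -/

import Mathlib

section KummerAux

variable {F A : Type*} [Field F] [DivisionRing A] [Algebra F A]

lemma kummer_auxA (i : F) (hi : i ^ 2 = -1) (v w z : A)
    (hwv : w * v = (-i) • (v * w)) (hzw : z * w = (-i) • (w * z))
    (hzv : z * v = i • (v * z)) :
    (v+w+z)^4 + (v+z+(-1:F)•w)^4
      = (2:F)•(v+z)^4 + (2:F)•w^4 + (-8-8*i)•(v*(w*(w*z))) := by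
  have h3 : i^3 = -i := by linear_combination i*hi
  have h4 : i^4 = 1 := by linear_combination (i^2-1)*hi
  have h5 : i^5 = i := by linear_combination (i^3-i)*hi
  have h6 : i^6 = -1 := by linear_combination (i^4-i^2+1)*hi
  have hwv' : ∀ x : A, w * (v * x) = (-i) • (v * (w * x)) := fun x => by
    rw [← mul_assoc, hwv, smul_mul_assoc, mul_assoc]
  have hzw' : ∀ x : A, z * (w * x) = (-i) • (w * (z * x)) := fun x => by
    rw [← mul_assoc, hzw, smul_mul_assoc, mul_assoc]
  have hzv' : ∀ x : A, z * (v * x) = i • (v * (z * x)) := fun x => by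
    rw [← mul_assoc, hzv, smul_mul_assoc, mul_assoc]
  simp only [pow_succ, pow_zero, one_mul, mul_add, add_mul, mul_assoc,
    smul_mul_assoc, mul_smul_comm, smul_smul, smul_add, hwv, hwv', hzw, hzw', hzv, hzv']
  match_scalars
  all_goals (try ring_nf)
  all_goals (try (simp only [h6, h5, h4, h3, hi]; ring_nf))

lemma kummer_auxB (i : F) (hi : i ^ 2 = -1) (v w z : A)
    (hwv : w * v = (-i) • (v * w)) (hzw : z * w = (-i) • (w * z))
    (hzv : z * v = i • (v * z)) :
    (v+w+z)^4 + (w+z+(-1:F)•v)^4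
      = (2:F)•(w+z)^4 + (2:F)•v^4 + (8-8*i)•(v*(v*(w*z))) := by
  have h3 : i^3 = -i := by linear_combination i*hi
  have h4 : i^4 = 1 := by linear_combination (i^2-1)*hi
  have h5 : i^5 = i := by linear_combination (i^3-i)*hi
  have h6 : i^6 = -1 := by linear_combination (i^4-i^2+1)*hi
  have hwv' : ∀ x : A, w * (v * x) = (-i) • (v * (w * x)) := fun x => by
    rw [← mul_assoc, hwv, smul_mul_assoc, mul_assoc]
  have hzw' : ∀ x : A, z * (w * x) = (-i) • (w * (z * x)) := fun x => by
    rw [← mul_assoc, hzw, smul_mul_assoc, mul_assoc]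
  have hzv' : ∀ x : A, z * (v * x) = i • (v * (z * x)) := fun x => by
    rw [← mul_assoc, hzv, smul_mul_assoc, mul_assoc]
  simp only [pow_succ, pow_zero, one_mul, mul_add, add_mul, mul_assoc,
    smul_mul_assoc, mul_smul_comm, smul_smul, smul_add, hwv, hwv', hzw, hzw', hzv, hzv']
  match_scalars
  all_goals (try ring_nf)
  all_goals (try (simp only [h6, h5, h4, h3, hi]; ring_nf))

end KummerAux

/-- There is no directed 3-cycle: there are no `F`-linearly independent `v, w, z`
spanning a Kummer space (of degree 4) with `v w = i · w v`, `w z = i · z w`, and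
`z v = i · v z`. -/
theorem statement5 {F A : Type*} [Field F] [CharZero F] [DivisionRing A] [Algebra F A]
    (i : F) (hi : i ^ 2 = -1) :
    ¬ ∃ v w z : A, LinearIndependent F ![v, w, z] ∧
      (∀ u ∈ Submodule.span F ({v, w, z} : Set A), u ^ 4 ∈ Set.range (algebraMap F A)) ∧
      v * w = i • (w * v) ∧ w * z = i • (z * w) ∧ z * v = i • (v * z) := by
  rintro ⟨v, w, z, hli, hK, h1, h2, h3⟩
  have hv : v ≠ 0 := by simpa using hli.ne_zero 0
  have hw : w ≠ 0 := by simpa using hli.ne_zero 1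
  have hz : z ≠ 0 := by simpa using hli.ne_zero 2
  have hinj : Function.Injective (algebraMap F A) := (algebraMap F A).injective
  have hni : (-i) * i = 1 := by linear_combination -hi
  have hwv : w * v = (-i) • (v * w) := by rw [h1, smul_smul, hni, one_smul]
  have hzw : z * w = (-i) • (w * z) := by rw [h2, smul_smul, hni, one_smul]
  have hzv : z * v = i • (v * z) := h3
  -- span memberships
  have mv : v ∈ Submodule.span F ({v, w, z} : Set A) :=
    Submodule.subset_span (by simp)
  have mw : w ∈ Submodule.span F ({v, w, z} : Set A) :=
    Submodule.subset_span (by simp)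
  have mz : z ∈ Submodule.span F ({v, w, z} : Set A) :=
    Submodule.subset_span (by simp)
  obtain ⟨cS, hS⟩ := hK (v+w+z) (add_mem (add_mem mv mw) mz)
  obtain ⟨cT, hT⟩ := hK (v+z+(-1:F)•w) (add_mem (add_mem mv mz) (Submodule.smul_mem _ _ mw))
  obtain ⟨cU, hU⟩ := hK (w+z+(-1:F)•v) (add_mem (add_mem mw mz) (Submodule.smul_mem _ _ mv))
  obtain ⟨cVZ, hVZ⟩ := hK (v+z) (add_mem mv mz)
  obtain ⟨cWZ, hWZ⟩ := hK (w+z) (add_mem mw mz)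
  obtain ⟨cV, hV⟩ := hK v mv
  obtain ⟨cW, hW⟩ := hK w mw
  -- nonvanishing of the scalars -8-8i and 8-8i
  have h8a : (-8 - 8*i : F) ≠ 0 := by
    intro h
    have : (i : F) = -1 := by linear_combination (-1/8 : F) * h
    rw [this] at hi; norm_num at hi
  have h8b : (8 - 8*i : F) ≠ 0 := by
    intro h
    have : (i : F) = 1 := by linear_combination (-1/8 : F) * h
    rw [this] at hi; norm_num at hi
  haveI : Module.IsTorsionFree F A := Module.isTorsionFree_iff_algebraMap_injective.mpr hinj
  -- the two key words are scalars
  set p : F := (cS + cT - 2*cVZ - 2*cW) / (-8 - 8*i) with hp_def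
  set q : F := (cS + cU - 2*cWZ - 2*cV) / (8 - 8*i) with hq_def
  have hsm : ∀ (c d : F), c • (algebraMap F A d) = algebraMap F A (c*d) := fun c d => by
    rw [Algebra.smul_def, ← map_mul]
  have hp : v*(w*(w*z)) = algebraMap F A p := by
    have idA := kummer_auxA i hi v w z hwv hzw hzv
    have e : (-8-8*i) • (v*(w*(w*z)))
        = algebraMap F A (cS + cT - 2*cVZ - 2*cW) := by
      have e0 : (-8-8*i) • (v*(w*(w*z)))
          = ((v+w+z)^4 + (v+z+(-1:F)•w)^4) - ((2:F)•(v+z)^4 + (2:F)•w^4) := by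
        rw [idA]; abel
      rw [e0, ← hS, ← hT, ← hVZ, ← hW, hsm, hsm, ← map_add, ← map_add, ← map_sub]
      exact congrArg _ (by ring)
    have e2 : (-8-8*i) • (algebraMap F A p) = algebraMap F A (cS + cT - 2*cVZ - 2*cW) := by
      rw [hsm]
      exact congrArg _ (by rw [hp_def]; exact mul_div_cancel₀ _ h8a)
    exact smul_right_injective A h8a (e.trans e2.symm)
  have hq : v*(v*(w*z)) = algebraMap F A q := by
    have idB := kummer_auxB i hi v w z hwv hzw hzv
    have e : (8-8*i) • (v*(v*(w*z)))
        = algebraMap F A (cS + cU - 2*cWZ - 2*cV) := by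
      have e0 : (8-8*i) • (v*(v*(w*z)))
          = ((v+w+z)^4 + (w+z+(-1:F)•v)^4) - ((2:F)•(w+z)^4 + (2:F)•v^4) := by
        rw [idB]; abel
      rw [e0, ← hS, ← hU, ← hWZ, ← hV, hsm, hsm, ← map_add, ← map_add, ← map_sub]
      exact congrArg _ (by ring)
    have e2 : (8-8*i) • (algebraMap F A q) = algebraMap F A (cS + cU - 2*cWZ - 2*cV) := by
      rw [hsm]
      exact congrArg _ (by rw [hq_def]; exact mul_div_cancel₀ _ h8b)
    exact smul_right_injective A h8b (e.trans e2.symm)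
  -- q ≠ 0
  have hword : v*(v*(w*z)) ≠ 0 := mul_ne_zero hv (mul_ne_zero hv (mul_ne_zero hw hz))
  have hq0 : q ≠ 0 := by
    intro h
    rw [h, map_zero] at hq
    exact hword hq
  -- derive q • w = p • v
  have e1 : q • (v*(w*(w*z))) = p • (v*(v*(w*z))) := by
    rw [hp, hq, Algebra.smul_def, Algebra.smul_def, ← map_mul, ← map_mul, mul_comm]
  have e2 : q • (w*(w*z)) = p • (v*(w*z)) := by
    apply mul_left_cancel₀ hv
    simpa [mul_smul_comm] using e1
  have e3 : (q • w) * (w*z) = (p • v) * (w*z) := by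
    rw [smul_mul_assoc, smul_mul_assoc]
    exact e2
  have hkey : q • w = p • v := mul_right_cancel₀ (mul_ne_zero hw hz) e3
  -- contradiction with linear independence
  have hsum : ∑ j, (![(-p), q, 0] : Fin 3 → F) j • (![v, w, z] : Fin 3 → A) j = 0 := by
    simp [Fin.sum_univ_three, hkey]
  have := Fintype.linearIndependent_iff.mp hli ![(-p), q, 0] hsum 1
  simp at this
  exact hq0 this
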